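/- Let β > 0, p₊ ∈ (0,1), and define f₊(u) = u·u^{βp₊−1}(1−u)^{β(1−p₊)−1}, f₋(u) = (1−u)·u^{βp₊−1}(1−u)^{β(1−p₊)−1} on (0,1). Then for all u ∈ (0,1): (1−u)f₊'(u) = −(β(1−p₊) − 1)f₊(u) + βp₊ f₋(u) and −u f₋'(u) = −(βp₊ − 1)f₋(u) + β(1−p₊) f₊(u). That is, the pair (f₊, f₋) given by the Beta(βp₊, β(1−p₊))-weighted densities is a stationary solution of the two-way feedback voter model PDE system when the switching probability α is constant equal to p₊. -/

import Mathlib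

open Filter

lemma rpow_mul_hasDerivAt (a b u : ℝ) (h0 : 0 < u) (h1 : u < 1) :
    HasDerivAt (fun x : ℝ => x ^ a * (1 - x) ^ b)
      (a * u ^ (a - 1) * (1 - u) ^ b - b * u ^ a * (1 - u) ^ (b - 1)) u := by
  have h1' : (0:ℝ) < 1 - u := by linarith
  have hA : HasDerivAt (fun x : ℝ => x ^ a) (a * u ^ (a - 1)) u :=
    Real.hasDerivAt_rpow_const (Or.inl h0.ne')
  have hB : HasDerivAt (fun x : ℝ => (1 - x) ^ b) (-(b * (1 - u) ^ (b - 1))) u := by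
    have hg : HasDerivAt (fun y : ℝ => y ^ b) (b * (1 - u) ^ (b - 1)) (1 - u) :=
      Real.hasDerivAt_rpow_const (Or.inl h1'.ne')
    have hf : HasDerivAt (fun x : ℝ => 1 - x) (-1) u := (hasDerivAt_id u).const_sub 1
    have : HasDerivAt (fun x : ℝ => (1 - x) ^ b) (b * (1 - u) ^ (b - 1) * -1) u := hg.comp u hf
    convert this using 1
    ring
  have : HasDerivAt (fun x : ℝ => x ^ a * (1 - x) ^ b)
      (a * u ^ (a - 1) * (1 - u) ^ b + u ^ a * -(b * (1 - u) ^ (b - 1))) u := hA.mul hB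
  convert this using 1
  ring

theorem stmt_14 (β pplus : ℝ) (hβ : 0 < β) (hp : pplus ∈ Set.Ioo (0 : ℝ) 1)
    (fp fm : ℝ → ℝ)
    (hfp : ∀ u, fp u = u * (u ^ (β * pplus - 1) * (1 - u) ^ (β * (1 - pplus) - 1)))
    (hfm : ∀ u, fm u = (1 - u) * (u ^ (β * pplus - 1) * (1 - u) ^ (β * (1 - pplus) - 1))) :
    ∀ u ∈ Set.Ioo (0 : ℝ) 1,
      (1 - u) * deriv fp u = -(β * (1 - pplus) - 1) * fp u + β * pplus * fm u ∧
      -u * deriv fm u = -(β * pplus - 1) * fm u + β * (1 - pplus) * fp u := by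
  intro u hu
  obtain ⟨h0, h1⟩ := hu
  have h1' : (0:ℝ) < 1 - u := by linarith
  have hmem : Set.Ioo (0:ℝ) 1 ∈ nhds u := isOpen_Ioo.mem_nhds ⟨h0, h1⟩
  have hfpe : fp =ᶠ[nhds u]
      fun x => x ^ (β * pplus) * (1 - x) ^ (β * (1 - pplus) - 1) := by
    filter_upwards [hmem] with x hx
    rw [hfp x, Real.rpow_sub hx.1, Real.rpow_one]
    field_simp [hx.1.ne']
  have hfme : fm =ᶠ[nhds u]
      fun x => x ^ (β * pplus - 1) * (1 - x) ^ (β * (1 - pplus)) := by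
    filter_upwards [hmem] with x hx
    have hx1 : (0:ℝ) < 1 - x := by linarith [hx.2]
    rw [hfm x, Real.rpow_sub hx1, Real.rpow_one]
    field_simp [hx1.ne']
  have dfp : deriv fp u =
      β * pplus * u ^ (β * pplus - 1) * (1 - u) ^ (β * (1 - pplus) - 1)
        - (β * (1 - pplus) - 1) * u ^ (β * pplus) * (1 - u) ^ (β * (1 - pplus) - 1 - 1) := by
    rw [hfpe.deriv_eq, (rpow_mul_hasDerivAt _ _ u h0 h1).deriv]
  have dfm : deriv fm u =
      (β * pplus - 1) * u ^ (β * pplus - 1 - 1) * (1 - u) ^ (β * (1 - pplus))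
        - β * (1 - pplus) * u ^ (β * pplus - 1) * (1 - u) ^ (β * (1 - pplus) - 1) := by
    rw [hfme.deriv_eq, (rpow_mul_hasDerivAt _ _ u h0 h1).deriv]
  have genu : ∀ c : ℝ, u ^ c = u ^ (c - 1) * u := by
    intro c
    rw [Real.rpow_sub h0, Real.rpow_one]
    field_simp
  have genv : ∀ c : ℝ, (1 - u) ^ c = (1 - u) ^ (c - 1) * (1 - u) := by
    intro c
    rw [Real.rpow_sub h1', Real.rpow_one]
    field_simp
  constructor
  · rw [dfp, hfp u, hfm u, genu (β * pplus), genv (β * (1 - pplus) - 1)]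
    ring
  · rw [dfm, hfm u, hfp u, genu (β * pplus - 1), genv (β * (1 - pplus))]
    ring
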